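/- Let a,b ∈ 𝔹². (i) If a·conj(b) ∉ ℝ (a, b and 0 not collinear), then for every z ∈ ℂ: π(z) lies in the affine plane in ℝ³ through the three points π(a), π(b) and (0,0,1/2) if and only if |z − (a(1−|b|²) − b(1−|a|²))/(b·conj(a) − a·conj(b))| = |a−b|·|1 + a·conj(b)|/|a·conj(b) − conj(a)·b|; this circle is the stereographic projection of the great circle through π(a) and π(b). (ii) If |a| ≠ |b|, then for every z ∈ ℂ: the Euclidean inner product of π(z) − (0,0,1/2) with π(b) − π(a) is zero if and only if |z − (b(1+|a|²) − a(1+|b|²))/(|a|² − |b|²)| = |a−b|·√((1+|a|²)(1+|b|²))/| |a|² − |b|² |; this circle is the stereographic projection of the great circle through the chordal midpoint of a and b that is orthogonal to the great circle through π(a) and π(b). -/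

import Mathlib

open ComplexConjugate

set_option maxHeartbeats 1600000

/-- The stereographic projection of the complex plane onto the Riemann sphere
with center `(0, 0, 1/2)` and radius `1/2` in `ℝ³`. -/
noncomputable def stereo (z : ℂ) : ℝ × ℝ × ℝ :=
  (z.re / (1 + ‖z‖ ^ 2), z.im / (1 + ‖z‖ ^ 2),
    ‖z‖ ^ 2 / (1 + ‖z‖ ^ 2))

/-- The Euclidean inner product on `ℝ³ = ℝ × ℝ × ℝ`. -/
def dot3 (p q : ℝ × ℝ × ℝ) : ℝ :=
  p.1 * q.1 + p.2.1 * q.2.1 + p.2.2 * q.2.2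

lemma sq_iff' {x y : ℝ} (hx : 0 ≤ x) (hy : 0 ≤ y) : x = y ↔ x ^ 2 = y ^ 2 := by
  constructor
  · rintro rfl; rfl
  · intro h; rw [← Real.sqrt_sq hx, ← Real.sqrt_sq hy, h]


theorem stmt19 (a b : ℂ) (ha : ‖a‖ < 1) (hb : ‖b‖ < 1) :
    (a * conj b ∉ Set.range (Complex.ofReal) →
      ∀ z : ℂ,
        (stereo z ∈ affineSpan ℝ
            ({stereo a, stereo b, ((0 : ℝ), (0 : ℝ), (1 / 2 : ℝ))} : Set (ℝ × ℝ × ℝ)) ↔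
          ‖z -
              (a * (1 - (‖b‖ : ℂ) ^ 2) - b * (1 - (‖a‖ : ℂ) ^ 2)) /
                (b * conj a - a * conj b)‖ =
            ‖a - b‖ * ‖1 + a * conj b‖ /
              ‖a * conj b - conj a * b‖)) ∧
    (‖a‖ ≠ ‖b‖ →
      ∀ z : ℂ,
        (dot3 (stereo z - ((0 : ℝ), (0 : ℝ), (1 / 2 : ℝ))) (stereo b - stereo a) = 0 ↔
          ‖z -
              (b * (1 + (‖a‖ : ℂ) ^ 2) - a * (1 + (‖b‖ : ℂ) ^ 2)) /
                ((‖a‖ : ℂ) ^ 2 - (‖b‖ : ℂ) ^ 2)‖ =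
            ‖a - b‖ *
                Real.sqrt ((1 + ‖a‖ ^ 2) * (1 + ‖b‖ ^ 2)) /
              |‖a‖ ^ 2 - ‖b‖ ^ 2|)) := by
  constructor
  · intro hR z
    have hi : (a * conj b).im ≠ 0 := fun h => hR ⟨(a * conj b).re, by
      apply Complex.ext <;> simp [h]⟩
    have hδ : a.re * b.im - a.im * b.re ≠ 0 := fun h => hi (by
      rw [Complex.mul_im, Complex.conj_im, Complex.conj_re]; linarith)
    have hA2 : ((‖a‖ : ℂ)) ^ 2 = ((Complex.normSq a : ℝ) : ℂ) := by
      rw [← Complex.ofReal_pow, Complex.sq_norm]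
    have hB2 : ((‖b‖ : ℂ)) ^ 2 = ((Complex.normSq b : ℝ) : ℂ) := by
      rw [← Complex.ofReal_pow, Complex.sq_norm]
    set A := Complex.normSq a with hAdef
    set B := Complex.normSq b with hBdef
    set Z := Complex.normSq z with hZdef
    have hA0 := Complex.normSq_nonneg a
    have hB0 := Complex.normSq_nonneg b
    have hZ0 := Complex.normSq_nonneg z
    have hzne : (1 : ℝ) + Z ≠ 0 := by positivity
    have hane : (1 : ℝ) + A ≠ 0 := by positivity
    have hbne : (1 : ℝ) + B ≠ 0 := by positivity
    set E : ℝ := z.re * (a.im * (B - 1) - b.im * (A - 1)) +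
        z.im * (b.re * (A - 1) - a.re * (B - 1)) +
        (Z - 1) * (a.re * b.im - a.im * b.re) with hEdef
    set Pa := stereo a with hPa
    set Pb := stereo b with hPb
    set C : ℝ × ℝ × ℝ := ((0 : ℝ), (0 : ℝ), (1 / 2 : ℝ)) with hC
    have hCmem : C ∈ ({Pa, Pb, C} : Set (ℝ × ℝ × ℝ)) := by simp
    have hmem : stereo z ∈ affineSpan ℝ ({Pa, Pb, C} : Set (ℝ × ℝ × ℝ)) ↔
        ∃ s t : ℝ, s • (Pa - C) + t • (Pb - C) = stereo z - C := by
      rw [← AffineSubspace.vsub_right_mem_direction_iff_mem (mem_affineSpan ℝ hCmem),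
        direction_affineSpan, vectorSpan_eq_span_vsub_set_right ℝ hCmem]
      have himg : ((fun x => x -ᵥ C) '' {Pa, Pb, C}) = {Pa - C, Pb - C, (0 : ℝ × ℝ × ℝ)} := by
        simp [Set.image_insert_eq, vsub_eq_sub, sub_self]
      rw [himg, show ({Pa - C, Pb - C, (0 : ℝ × ℝ × ℝ)} : Set (ℝ × ℝ × ℝ)) =
        insert 0 {Pa - C, Pb - C} by ext w; simp; tauto, Submodule.span_insert_zero,
        Submodule.mem_span_pair]
      simp [vsub_eq_sub]
    rw [hmem]
    have hcomp : (∃ s t : ℝ, s • (Pa - C) + t • (Pb - C) = stereo z - C) ↔ E = 0 := by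
      constructor
      · rintro ⟨s, t, h⟩
        have h1 := congrArg Prod.fst h
        have h2 := congrArg (fun w : ℝ × ℝ × ℝ => w.2.1) h
        have h3 := congrArg (fun w : ℝ × ℝ × ℝ => w.2.2) h
        simp only [hPa, hPb, hC, stereo, Prod.fst_add, Prod.snd_add, Prod.fst_sub, Prod.snd_sub,
          Prod.smul_fst, Prod.smul_snd, smul_eq_mul, Complex.sq_norm, sub_zero,
          ← hAdef, ← hBdef, ← hZdef] at h1 h2 h3
        field_simp at h1 h2 h3
        have hE0 : E * ((1 + A) * (1 + B)) = 0 := by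
          linear_combination (-(a.im * (B - 1) - b.im * (A - 1))) * h1 +
            (-(b.re * (A - 1) - a.re * (B - 1))) * h2 +
            (-(a.re * b.im - a.im * b.re)) * h3
        rcases mul_eq_zero.mp hE0 with h' | h'
        · exact h'
        · exact absurd h' (by positivity)
      · intro hE
        refine ⟨(1 + A) * (z.re * b.im - z.im * b.re) / ((1 + Z) * (a.re * b.im - a.im * b.re)),
          (1 + B) * (z.im * a.re - z.re * a.im) / ((1 + Z) * (a.re * b.im - a.im * b.re)), ?_⟩
        have hden : (1 + Z) * (a.re * b.im - a.im * b.re) ≠ 0 := mul_ne_zero hzne hδ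
        have hδ' : b.im * a.re - b.re * a.im ≠ 0 := fun h => hδ (by linarith)
        refine Prod.ext ?_ (Prod.ext ?_ ?_) <;>
          simp only [hPa, hPb, hC, stereo, Prod.fst_add, Prod.snd_add, Prod.fst_sub, Prod.snd_sub,
            Prod.smul_fst, Prod.smul_snd, smul_eq_mul, Complex.sq_norm, sub_zero,
            ← hAdef, ← hBdef, ← hZdef]
        · field_simp
          ring
        · field_simp
          ring
        · field_simp
          linear_combination (-1) * hE
    rw [hcomp, hA2, hB2]
    -- circle side
    set q : ℂ := b * conj a - a * conj b with hq
    have hqim : q.im = 2 * (a.re * b.im - a.im * b.re) := by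
      simp [hq, Complex.sub_im, Complex.mul_im, Complex.conj_re, Complex.conj_im]
      ring
    have hq0 : q ≠ 0 := by
      intro h
      apply hδ
      have h2 := congrArg Complex.im h
      rw [hqim, Complex.zero_im] at h2
      linarith
    set p : ℂ := a * (1 - ((B : ℝ) : ℂ)) - b * (1 - ((A : ℝ) : ℂ)) with hp
    have habsq : ‖a * conj b - conj a * b‖ = ‖q‖ := by
      rw [show a * conj b - conj a * b = -q by rw [hq]; ring, norm_neg]
    have key : z - p / q = (z * q - p) / q := by
      rw [eq_comm, sub_div, mul_div_cancel_right₀ _ hq0]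
    rw [habsq, key, norm_div, div_eq_div_iff ((norm_ne_zero_iff.mpr hq0)) ((norm_ne_zero_iff.mpr hq0)),
      mul_left_inj' ((norm_ne_zero_iff.mpr hq0)),
      sq_iff' (norm_nonneg _) (by positivity), mul_pow,
      Complex.sq_norm, Complex.sq_norm, Complex.sq_norm]
    have hiden : Complex.normSq (z * q - p) - Complex.normSq (a - b) *
        Complex.normSq (1 + a * conj b) = 4 * (a.re * b.im - a.im * b.re) * E := by
      simp only [hEdef, hp, hq, hAdef, hBdef, hZdef, Complex.normSq_apply, Complex.mul_re,
        Complex.mul_im, Complex.sub_re, Complex.sub_im, Complex.add_re, Complex.add_im,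
        Complex.one_re, Complex.one_im, Complex.ofReal_re, Complex.ofReal_im,
        Complex.conj_re, Complex.conj_im]
      ring
    constructor
    · intro h
      have h2 : Complex.normSq (z * q - p) - Complex.normSq (a - b) *
          Complex.normSq (1 + a * conj b) = 0 := by rw [hiden, h, mul_zero]
      linarith
    · intro h
      have h4 : 4 * (a.re * b.im - a.im * b.re) * E = 0 := by rw [← hiden, h, sub_self]
      rcases mul_eq_zero.mp h4 with h3 | h3
      · exact absurd (by linarith : a.re * b.im - a.im * b.re = 0) hδ
      · exact h3
  · intro hAB z
    have hA2 : ((‖a‖ : ℂ)) ^ 2 = ((Complex.normSq a : ℝ) : ℂ) := by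
      rw [← Complex.ofReal_pow, Complex.sq_norm]
    have hB2 : ((‖b‖ : ℂ)) ^ 2 = ((Complex.normSq b : ℝ) : ℂ) := by
      rw [← Complex.ofReal_pow, Complex.sq_norm]
    have hd : Complex.normSq a - Complex.normSq b ≠ 0 := by
      refine sub_ne_zero.mpr (fun h => hAB ?_)
      rw [← Real.sqrt_sq (norm_nonneg a), ← Real.sqrt_sq (norm_nonneg b),
        Complex.sq_norm, Complex.sq_norm, h]
    set A := Complex.normSq a with hAdef
    set B := Complex.normSq b with hBdef
    set Z := Complex.normSq z with hZdef
    have hA0 := Complex.normSq_nonneg a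
    have hB0 := Complex.normSq_nonneg b
    have hZ0 := Complex.normSq_nonneg z
    set E : ℝ := 2 * (z.re * (b.re * (1 + A) - a.re * (1 + B)) +
        z.im * (b.im * (1 + A) - a.im * (1 + B))) + (Z - 1) * (B - A) with hEdef
    set p : ℂ := b * (1 + ((A : ℝ) : ℂ)) - a * (1 + ((B : ℝ) : ℂ)) with hpdef
    have hE : dot3 (stereo z - ((0 : ℝ), (0 : ℝ), (1 / 2 : ℝ))) (stereo b - stereo a)
        = E / (2 * (1 + Z) * (1 + A) * (1 + B)) := by
      have hzne : (1 : ℝ) + Z ≠ 0 := by positivity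
      have hane : (1 : ℝ) + A ≠ 0 := by positivity
      have hbne : (1 : ℝ) + B ≠ 0 := by positivity
      simp only [stereo, dot3, Prod.fst_sub, Prod.snd_sub, Complex.sq_norm, ← hAdef, ← hBdef,
        ← hZdef]
      field_simp
      ring
    have hiden : Complex.normSq (z * ((A - B : ℝ) : ℂ) - p) - Complex.normSq (a - b) *
        ((1 + A) * (1 + B)) = -(A - B) * E := by
      simp only [hEdef, hpdef, hAdef, hBdef, hZdef, Complex.normSq_apply, Complex.mul_re,
        Complex.mul_im, Complex.sub_re, Complex.sub_im, Complex.add_re, Complex.add_im,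
        Complex.one_re, Complex.one_im, Complex.ofReal_re, Complex.ofReal_im]
      ring
    have hdc : ((A - B : ℝ) : ℂ) ≠ 0 := Complex.ofReal_ne_zero.mpr hd
    have key : z - p / ((A - B : ℝ) : ℂ) = (z * ((A - B : ℝ) : ℂ) - p) / ((A - B : ℝ) : ℂ) := by
      rw [eq_comm, sub_div, mul_div_cancel_right₀ _ hdc]
    have hcirc : (‖z - p / ((A - B : ℝ) : ℂ)‖ =
        ‖a - b‖ * Real.sqrt ((1 + A) * (1 + B)) / |A - B|) ↔
        Complex.normSq (z * ((A - B : ℝ) : ℂ) - p) =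
          Complex.normSq (a - b) * ((1 + A) * (1 + B)) := by
      rw [key, norm_div, Complex.norm_real, Real.norm_eq_abs,
        sq_iff' (by positivity) (by positivity), div_pow, div_pow, mul_pow, sq_abs,
        Complex.sq_norm, Complex.sq_norm, Real.sq_sqrt (by positivity),
        div_eq_div_iff (pow_ne_zero 2 hd) (pow_ne_zero 2 hd), mul_left_inj' (pow_ne_zero 2 hd)]
    rw [hE, div_eq_zero_iff]
    have hden : (2 * (1 + Z) * (1 + A) * (1 + B)) ≠ 0 := by positivity
    simp only [hden, or_false]
    rw [hA2, hB2, ← Complex.ofReal_sub]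
    simp only [Complex.sq_norm, ← hAdef, ← hBdef]
    rw [hcirc]
    constructor
    · intro h
      have h2 : Complex.normSq (z * ((A - B : ℝ) : ℂ) - p) - Complex.normSq (a - b) *
          ((1 + A) * (1 + B)) = 0 := by rw [hiden, h, mul_zero]
      linarith
    · intro h
      have h4 : -(A - B) * E = 0 := by rw [← hiden, h, sub_self]
      rcases mul_eq_zero.mp h4 with h3 | h3
      · exact absurd (by linarith [neg_eq_zero.mp h3] : A - B = 0) hd
      · exact h3
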